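/- The P–CEA rule satisfies order preservation: if c_i ≥ c_j then ψ^L_i(c,e) ≥ ψ^L_j(c,e) and c_i − ψ^L_i(c,e) ≥ c_j − ψ^L_j(c,e), for any claims problem (c,e) and 0 ≤ L ≤ λ. -/

import Mathlib

open Finset

noncomputable def propRule {n : ℕ} (d : Fin n → ℝ) (m : ℝ) (i : Fin n) : ℝ :=
  if (∑ j, d j) = 0 then 0 else d i / (∑ j, d j) * m

noncomputable def psi {n : ℕ} (L : ℝ) (c : Fin n → ℝ) (e : ℝ) (i : Fin n) : ℝ :=
  min (c i) L + propRule (fun j => c j - min (c j) L) (e - ∑ j, min (c j) L) i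

theorem pcea_order_preservation {n : ℕ} (c : Fin n → ℝ) (e L lam : ℝ)
    (hc0 : ∀ i, 0 ≤ c i)
    (he0 : 0 ≤ e) (he : e < ∑ i, c i)
    (hlam0 : 0 ≤ lam) (hlam : ∑ i, min (c i) lam = e)
    (hL0 : 0 ≤ L) (hLlam : L ≤ lam) :
    ∀ i j : Fin n, c j ≤ c i →
      psi L c e j ≤ psi L c e i ∧ c j - psi L c e j ≤ c i - psi L c e i := by
  intro i j hji
  have hMe : (∑ k, min (c k) L) ≤ e := by
    rw [← hlam]
    exact Finset.sum_le_sum fun k _ => min_le_min le_rfl hLlam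
  have hSsum : (∑ k, (c k - min (c k) L)) = (∑ k, c k) - ∑ k, min (c k) L :=
    Finset.sum_sub_distrib _ _
  have hSe : e - (∑ k, min (c k) L) < ∑ k, (c k - min (c k) L) := by
    rw [hSsum]; linarith
  have hS0 : 0 < ∑ k, (c k - min (c k) L) := lt_of_le_of_lt (by linarith) hSe
  have hprop : ∀ k, propRule (fun j => c j - min (c j) L) (e - ∑ k, min (c k) L) k
      = (c k - min (c k) L) * ((e - ∑ k, min (c k) L) / (∑ k, (c k - min (c k) L))) := by
    intro k
    unfold propRule
    rw [if_neg (ne_of_gt hS0)]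
    ring
  have hdj : c j - min (c j) L ≤ c i - min (c i) L := by
    rcases le_total (c j) L with h | h
    · rw [min_eq_left h]
      rcases le_total (c i) L with h2 | h2
      · rw [min_eq_left h2]; linarith
      · rw [min_eq_right h2]; linarith
    · rw [min_eq_right h, min_eq_right (le_trans h hji)]; linarith
  have hmj : min (c j) L ≤ min (c i) L := min_le_min hji le_rfl
  have ht0 : 0 ≤ (e - ∑ k, min (c k) L) / (∑ k, (c k - min (c k) L)) :=
    div_nonneg (by linarith) (le_of_lt hS0)
  have ht1 : (e - ∑ k, min (c k) L) / (∑ k, (c k - min (c k) L)) ≤ 1 := by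
    rw [div_le_one hS0]; linarith
  have hd0 : 0 ≤ c j - min (c j) L := by
    have := min_le_left (c j) L; linarith
  constructor
  · unfold psi
    rw [hprop i, hprop j]
    have := mul_le_mul_of_nonneg_right hdj ht0
    linarith
  · unfold psi
    rw [hprop i, hprop j]
    have h1 := mul_le_mul_of_nonneg_right hdj (sub_nonneg.2 ht1)
    have hmi : min (c i) L ≤ c i := min_le_left _ _
    have hmjj : min (c j) L ≤ c j := min_le_left _ _
    nlinarith
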